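/- For every integer n ≥ 1 and all real numbers y, t with (1+y)(y+t)(1+yt) ≠ 0, one has Σ_{σ∈B_n} y^{neg σ} t^{exc_B σ} = (1+yt)^n · Σ_{σ∈S_n} ((1+y)² t/((y+t)(1+yt)))^{cpk σ} · ((y+t)/(1+yt))^{exc σ}. -/

import Mathlib

open Finset

open scoped Classical

noncomputable section

namespace EulerExc

variable {n : ℕ}

/-- 1-based value of `σ` at position `k ∈ [1,n]`, with boundary convention
`σ(0) = σ(n+1) = 0` outside. -/
def sv (σ : Equiv.Perm (Fin n)) (k : ℕ) : ℕ :=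
  if h : 1 ≤ k ∧ k ≤ n then ((σ ⟨k - 1, by omega⟩ : Fin n) : ℕ) + 1 else 0

/-- 1-based value with boundary convention `σ(0) = 0`, `σ(n+1) = ∞`. -/
def svInf (σ : Equiv.Perm (Fin n)) (k : ℕ) : ℕ :=
  if k = 0 then 0 else if k ≤ n then sv σ k else n + 1

/-- number of excedances -/
def exc (σ : Equiv.Perm (Fin n)) : ℕ := (univ.filter fun i : Fin n => i < σ i).card

/-- number of fixed points -/
def fixc (σ : Equiv.Perm (Fin n)) : ℕ := (univ.filter fun i : Fin n => σ i = i).card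

/-- number of drops -/
def dropc (σ : Equiv.Perm (Fin n)) : ℕ := (univ.filter fun i : Fin n => σ i < i).card

/-- number of inversions -/
def inv (σ : Equiv.Perm (Fin n)) : ℕ :=
  (univ.filter fun p : Fin n × Fin n => p.1 < p.2 ∧ σ p.2 < σ p.1).card

/-- number of descents -/
def des (σ : Equiv.Perm (Fin n)) : ℕ :=
  ((Icc 1 (n - 1)).filter fun i => sv σ (i + 1) < sv σ i).card

/-- number of ascents -/
def asc (σ : Equiv.Perm (Fin n)) : ℕ :=
  ((Icc 1 (n - 1)).filter fun i => sv σ i < sv σ (i + 1)).card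

/-- crossing number: pairs `(i,j)` with `j < i < σ(j) < σ(i)` or `σ(i) < σ(j) ≤ i < j` -/
def cros (σ : Equiv.Perm (Fin n)) : ℕ :=
  (univ.filter fun p : Fin n × Fin n =>
    (p.2 < p.1 ∧ p.1 < σ p.2 ∧ σ p.2 < σ p.1) ∨
    (σ p.1 < σ p.2 ∧ σ p.2 ≤ p.1 ∧ p.1 < p.2)).card

/-- nesting number: pairs `(i,j)` with `j < i < σ(i) < σ(j)` or `σ(j) < σ(i) ≤ i < j` -/
def nest (σ : Equiv.Perm (Fin n)) : ℕ :=
  (univ.filter fun p : Fin n × Fin n =>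
    (p.2 < p.1 ∧ p.1 < σ p.1 ∧ σ p.1 < σ p.2) ∨
    (σ p.2 < σ p.1 ∧ σ p.1 ≤ p.1 ∧ p.1 < p.2)).card

def icr (σ : Equiv.Perm (Fin n)) : ℕ := cros σ⁻¹

/-- number of cyclic peaks -/
def cpk (σ : Equiv.Perm (Fin n)) : ℕ :=
  (univ.filter fun x : Fin n => σ⁻¹ x < x ∧ σ x < x).card

/-- number of cyclic valleys -/
def cval (σ : Equiv.Perm (Fin n)) : ℕ :=
  (univ.filter fun x : Fin n => x < σ⁻¹ x ∧ x < σ x).card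

/-- number of double excedances -/
def cda (σ : Equiv.Perm (Fin n)) : ℕ :=
  (univ.filter fun x : Fin n => σ⁻¹ x < x ∧ x < σ x).card

/-- number of double drops -/
def cdd (σ : Equiv.Perm (Fin n)) : ℕ :=
  (univ.filter fun x : Fin n => x < σ⁻¹ x ∧ σ x < x).card

/-- number of cycles (including fixed points) -/
def cyc (σ : Equiv.Perm (Fin n)) : ℕ := σ.cycleType.card + fixc σ

/-- the star companion `σ*` of `σ`: a permutation of `{0,1,…,n}` with
`σ*(0) = n` and `σ*(i) = σ(i) - 1` for `i ∈ [n]`. -/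
def star (σ : Equiv.Perm (Fin n)) : Equiv.Perm (Fin (n + 1)) :=
  (Equiv.Perm.decomposeFin.symm (0, σ)).trans (Equiv.subRight (1 : Fin (n + 1)))

def cpkStar (σ : Equiv.Perm (Fin n)) : ℕ :=
  (univ.filter fun i : Fin (n + 1) =>
    1 ≤ (i : ℕ) ∧ (i : ℕ) < n ∧ (star σ)⁻¹ i < i ∧ star σ i < i).card

def cdaStar (σ : Equiv.Perm (Fin n)) : ℕ :=
  (univ.filter fun i : Fin (n + 1) =>
    1 ≤ (i : ℕ) ∧ (i : ℕ) < n ∧ (star σ)⁻¹ i < i ∧ i < star σ i).card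

def cddStar (σ : Equiv.Perm (Fin n)) : ℕ :=
  (univ.filter fun i : Fin (n + 1) =>
    1 ≤ (i : ℕ) ∧ (i : ℕ) < n ∧ i < (star σ)⁻¹ i ∧ star σ i < i).card

def fixStar (σ : Equiv.Perm (Fin n)) : ℕ :=
  (univ.filter fun i : Fin (n + 1) =>
    1 ≤ (i : ℕ) ∧ (i : ℕ) < n ∧ star σ i = i).card

def cycStar (σ : Equiv.Perm (Fin n)) : ℕ := cyc (star σ)

/-- number of occurrences of the vincular pattern 31-2 -/
def p31_2 (σ : Equiv.Perm (Fin n)) : ℕ :=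
  ((Icc 1 n ×ˢ Icc 1 n).filter fun p =>
    p.1 + 1 < p.2 ∧ sv σ (p.1 + 1) < sv σ p.2 ∧ sv σ p.2 < sv σ p.1).card

/-- number of occurrences of the vincular pattern 2-13 -/
def p2_13 (σ : Equiv.Perm (Fin n)) : ℕ :=
  ((Icc 1 n ×ˢ Icc 1 n).filter fun p =>
    p.2 < p.1 ∧ p.1 < n ∧ sv σ p.1 < sv σ p.2 ∧ sv σ p.2 < sv σ (p.1 + 1)).card

/-- number of occurrences of the vincular pattern 2-31 -/
def p2_31 (σ : Equiv.Perm (Fin n)) : ℕ :=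
  ((Icc 1 n ×ˢ Icc 1 n).filter fun p =>
    p.2 < p.1 ∧ p.1 < n ∧ sv σ (p.1 + 1) < sv σ p.2 ∧ sv σ p.2 < sv σ p.1).card

/-- number of peaks (convention 0--0) -/
def pk (σ : Equiv.Perm (Fin n)) : ℕ :=
  ((Icc 1 n).filter fun i => sv σ (i - 1) < sv σ i ∧ sv σ (i + 1) < sv σ i).card

/-- number of valleys (convention 0--0) -/
def vall (σ : Equiv.Perm (Fin n)) : ℕ :=
  ((Icc 1 n).filter fun i => sv σ i < sv σ (i - 1) ∧ sv σ i < sv σ (i + 1)).card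

/-- number of double ascents (convention 0--0) -/
def da (σ : Equiv.Perm (Fin n)) : ℕ :=
  ((Icc 1 n).filter fun i => sv σ (i - 1) < sv σ i ∧ sv σ i < sv σ (i + 1)).card

/-- number of double descents (convention 0--0) -/
def dd (σ : Equiv.Perm (Fin n)) : ℕ :=
  ((Icc 1 n).filter fun i => sv σ i < sv σ (i - 1) ∧ sv σ (i + 1) < sv σ i).card

/-- number of peaks (convention 0--∞) -/
def lpk (σ : Equiv.Perm (Fin n)) : ℕ :=
  ((Icc 1 n).filter fun i => svInf σ (i - 1) < svInf σ i ∧ svInf σ (i + 1) < svInf σ i).card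

/-- number of valleys (convention 0--∞) -/
def lval (σ : Equiv.Perm (Fin n)) : ℕ :=
  ((Icc 1 n).filter fun i => svInf σ i < svInf σ (i - 1) ∧ svInf σ i < svInf σ (i + 1)).card

/-- number of double ascents (convention 0--∞) -/
def lda (σ : Equiv.Perm (Fin n)) : ℕ :=
  ((Icc 1 n).filter fun i => svInf σ (i - 1) < svInf σ i ∧ svInf σ i < svInf σ (i + 1)).card

/-- number of double descents (convention 0--∞) -/
def ldd (σ : Equiv.Perm (Fin n)) : ℕ :=
  ((Icc 1 n).filter fun i => svInf σ i < svInf σ (i - 1) ∧ svInf σ (i + 1) < svInf σ i).card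

/-- number of foremaxima: double ascents (convention 0--∞) that are
left-to-right maxima -/
def fmax (σ : Equiv.Perm (Fin n)) : ℕ :=
  ((Icc 1 n).filter fun i =>
    svInf σ (i - 1) < svInf σ i ∧ svInf σ i < svInf σ (i + 1) ∧
    ∀ j ∈ Icc 1 i, sv σ j ≤ sv σ i).card

/-- `scda σ = #{i ∈ [n-1] : i < σ(i) and i+1 > σ⁻¹(i+1)}` -/
def scda (σ : Equiv.Perm (Fin n)) : ℕ :=
  ((Icc 1 (n - 1)).filter fun i => i < sv σ i ∧ sv σ⁻¹ (i + 1) < i + 1).card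

/-- `σ` avoids the pattern 321 -/
def Avoids321 (σ : Equiv.Perm (Fin n)) : Prop :=
  ¬ ∃ i j k : Fin n, i < j ∧ j < k ∧ σ k < σ j ∧ σ j < σ i

/-- `σ` avoids the pattern 231 -/
def Avoids231 (σ : Equiv.Perm (Fin n)) : Prop :=
  ¬ ∃ i j k : Fin n, i < j ∧ j < k ∧ σ k < σ i ∧ σ i < σ j

/-- `σ` avoids the pattern 312 -/
def Avoids312 (σ : Equiv.Perm (Fin n)) : Prop :=
  ¬ ∃ i j k : Fin n, i < j ∧ j < k ∧ σ j < σ k ∧ σ k < σ i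

/-- `σ` avoids the pattern 213 -/
def Avoids213 (σ : Equiv.Perm (Fin n)) : Prop :=
  ¬ ∃ i j k : Fin n, i < j ∧ j < k ∧ σ j < σ i ∧ σ i < σ k

/-- `σ` avoids the pattern 132 -/
def Avoids132 (σ : Equiv.Perm (Fin n)) : Prop :=
  ¬ ∃ i j k : Fin n, i < j ∧ j < k ∧ σ i < σ k ∧ σ k < σ j

/-- `σ` is a derangement -/
def IsDerangement (σ : Equiv.Perm (Fin n)) : Prop := ∀ i, σ i ≠ i

/-! Signed permutations `B_n`, encoded as a pair `(σ, ε)` of an ordinary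
permutation (the absolute value) together with signs attached to positions. -/

/-- number of negative values -/
def negB (ε : Fin n → Bool) : ℕ := (univ.filter fun i => ε i = true).card

/-- number of type B excedances, w.r.t. the friends order -/
def excB (σ : Equiv.Perm (Fin n)) (ε : Fin n → Bool) : ℕ :=
  (univ.filter fun i : Fin n => i < σ i ∨ (σ i = i ∧ ε i = true)).card

/-- the (1-based, signed, integer) value of the signed permutation `(σ, ε)` at
position `k ∈ [1,n]`, with `0` outside. -/
def signedVal (σ : Equiv.Perm (Fin n)) (ε : Fin n → Bool) (k : ℕ) : ℤ :=
  if h : 1 ≤ k ∧ k ≤ n then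
    (if ε ⟨k - 1, by omega⟩ then -(((σ ⟨k - 1, by omega⟩ : Fin n) : ℕ) + 1 : ℤ)
     else (((σ ⟨k - 1, by omega⟩ : Fin n) : ℕ) + 1 : ℤ))
  else 0

/-- number of type B descents -/
def desB (σ : Equiv.Perm (Fin n)) (ε : Fin n → Bool) : ℕ :=
  ((range n).filter fun i => signedVal σ ε (i + 1) < signedVal σ ε i).card


/-! ### Auxiliary development for stmt17 -/

section Aux

variable {m : ℕ}

private lemma inv_ne_self {σ : Equiv.Perm (Fin m)} {x : Fin m} (h : σ x ≠ x) : σ⁻¹ x ≠ x := by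
  intro hx
  apply h
  have := congrArg σ hx
  simpa using this.symm

private lemma lt_of_not_lt_of_ne {a b : Fin m} (h : ¬ a < b) (h2 : a ≠ b) : b < a :=
  lt_of_le_of_ne (not_lt.mp h) h2.symm

private lemma card_inv_lt (σ : Equiv.Perm (Fin m)) :
    (univ.filter fun x : Fin m => σ⁻¹ x < x).card = exc σ := by
  unfold exc
  apply Finset.card_bij' (fun x _ => σ⁻¹ x) (fun y _ => σ y)
  · intro a ha
    simp only [mem_filter, mem_univ, true_and] at ha ⊢
    simpa using ha
  · intro a ha
    simp only [mem_filter, mem_univ, true_and] at ha ⊢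
    simpa using ha
  · intro a _; simp
  · intro a _; simp

private lemma exc_eq_cval_add_cda (σ : Equiv.Perm (Fin m)) : exc σ = cval σ + cda σ := by
  unfold exc cval cda
  rw [← Finset.card_filter_add_card_filter_not
    (s := univ.filter fun i : Fin m => i < σ i) (p := fun x => x < σ⁻¹ x)]
  congr 2
  · rw [Finset.filter_filter]
    apply Finset.filter_congr; intro x _
    tauto
  · rw [Finset.filter_filter]
    apply Finset.filter_congr; intro x _

    constructor
    · rintro ⟨h1, h2⟩
      exact ⟨lt_of_not_lt_of_ne h2 (Ne.symm (inv_ne_self (ne_of_gt h1))), h1⟩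
    · rintro ⟨h1, h2⟩
      exact ⟨h2, not_lt.mpr (le_of_lt h1)⟩

private lemma drop_eq_cpk_add_cdd (σ : Equiv.Perm (Fin m)) : dropc σ = cpk σ + cdd σ := by
  unfold dropc cpk cdd
  rw [← Finset.card_filter_add_card_filter_not
    (s := univ.filter fun i : Fin m => σ i < i) (p := fun x => σ⁻¹ x < x)]
  congr 2
  · rw [Finset.filter_filter]
    apply Finset.filter_congr; intro x _
    tauto
  · rw [Finset.filter_filter]
    apply Finset.filter_congr; intro x _

    constructor
    · rintro ⟨h1, h2⟩
      exact ⟨lt_of_not_lt_of_ne h2 (inv_ne_self (ne_of_lt h1)), h1⟩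
    · rintro ⟨h1, h2⟩
      exact ⟨h2, not_lt.mpr (le_of_lt h1)⟩

private lemma card_inv_lt_eq (σ : Equiv.Perm (Fin m)) :
    (univ.filter fun x : Fin m => σ⁻¹ x < x).card = cda σ + cpk σ := by
  unfold cda cpk
  rw [← Finset.card_filter_add_card_filter_not
    (s := univ.filter fun i : Fin m => σ⁻¹ i < i) (p := fun x => x < σ x)]
  congr 2
  · rw [Finset.filter_filter]
  · rw [Finset.filter_filter]
    apply Finset.filter_congr; intro x _

    constructor
    · rintro ⟨h1, h2⟩
      refine ⟨h1, lt_of_not_lt_of_ne h2 ?_⟩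
      intro hc
      have h3 : σ⁻¹ x = x := by conv_lhs => rw [hc]; rw [Equiv.Perm.coe_inv, Equiv.symm_apply_apply]
      rw [h3] at h1
      exact absurd h1 (lt_irrefl x)
    · rintro ⟨h1, h2⟩
      exact ⟨h1, not_lt.mpr (le_of_lt h2)⟩

private lemma cpk_eq_cval (σ : Equiv.Perm (Fin m)) : cpk σ = cval σ := by
  have h1 := card_inv_lt σ
  have h2 := card_inv_lt_eq σ
  have h3 := exc_eq_cval_add_cda σ
  omega

private lemma univ_card_split (σ : Equiv.Perm (Fin m)) : exc σ + dropc σ + fixc σ = m := by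
  unfold exc dropc fixc
  have h := Finset.card_filter_add_card_filter_not
    (s := (univ : Finset (Fin m))) (p := fun x => σ x = x)
  rw [Finset.card_univ, Fintype.card_fin] at h
  have h2 := Finset.card_filter_add_card_filter_not
    (s := univ.filter fun x : Fin m => ¬ σ x = x) (p := fun x => x < σ x)
  rw [Finset.filter_filter, Finset.filter_filter] at h2
  have e1 : (univ.filter fun i : Fin m => i < σ i) =
      (univ.filter fun a : Fin m => ¬σ a = a ∧ a < σ a) := by
    apply Finset.filter_congr; intro x _

    exact ⟨fun hx => ⟨ne_of_gt hx, hx⟩, fun hx => hx.2⟩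
  have e2 : (univ.filter fun i : Fin m => σ i < i) =
      (univ.filter fun a : Fin m => ¬σ a = a ∧ ¬a < σ a) := by
    apply Finset.filter_congr; intro x _

    exact ⟨fun hx => ⟨ne_of_lt hx, not_lt.mpr (le_of_lt hx)⟩,
      fun hx => lt_of_not_lt_of_ne hx.2 (Ne.symm hx.1)⟩
  rw [e1, e2]
  omega
/-! ### Polynomial weights -/

open MvPolynomial in
private def wgt (σ : Equiv.Perm (Fin m)) (x : Fin m) : MvPolynomial (Fin 4) ℝ :=
  if σ x = x then X 3
  else if x < σ x then (if σ⁻¹ x < x then X 1 else X 0)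
  else (if x < σ⁻¹ x then X 2 else 1)

open MvPolynomial in
private lemma prod_wgt (σ : Equiv.Perm (Fin m)) (s : Finset (Fin m)) :
    ∏ x ∈ s, wgt σ x =
      X 0 ^ (s.filter fun x => x < σ⁻¹ x ∧ x < σ x).card *
      X 1 ^ (s.filter fun x => σ⁻¹ x < x ∧ x < σ x).card *
      X 2 ^ (s.filter fun x => x < σ⁻¹ x ∧ σ x < x).card *
      X 3 ^ (s.filter fun x => σ x = x).card := by
  induction s using Finset.induction_on with
  | empty => simp
  | insert _ _ ha _ =>
    rename_i a s ih
    have hmem : ∀ p : Fin m → Prop, ∀ hp : DecidablePred p, a ∉ s.filter p :=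
      fun p hp hc => ha (Finset.mem_of_mem_filter a hc)
    rw [Finset.prod_insert ha, ih, Finset.filter_insert, Finset.filter_insert,
      Finset.filter_insert, Finset.filter_insert]
    by_cases h1 : σ a = a
    · have h2 : σ⁻¹ a = a := by conv_lhs => rw [← h1]; rw [Equiv.Perm.coe_inv, Equiv.symm_apply_apply]
      have hw : wgt σ a = X 3 := by simp [wgt, h1]
      rw [hw, if_neg (by omega), if_neg (by omega), if_neg (by omega), if_pos h1,
        Finset.card_insert_of_notMem (hmem _ _)]
      ring
    · have h2 : σ⁻¹ a ≠ a := inv_ne_self h1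
      by_cases h3 : a < σ a
      · by_cases h4 : σ⁻¹ a < a
        · have hw : wgt σ a = X 1 := by simp [wgt, h1, h3, h4, -Equiv.Perm.coe_inv]
          rw [hw, if_neg (by omega), if_pos ⟨h4, h3⟩, if_neg (by omega), if_neg h1,
            Finset.card_insert_of_notMem (hmem _ _)]
          ring
        · have h5 : a < σ⁻¹ a := by omega
          have hw : wgt σ a = X 0 := by simp [wgt, h1, h3, h4, -Equiv.Perm.coe_inv]
          rw [hw, if_pos ⟨h5, h3⟩, if_neg (by omega), if_neg (by omega), if_neg h1,
            Finset.card_insert_of_notMem (hmem _ _)]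
          ring
      · have h3' : σ a < a := by
          rcases lt_trichotomy (σ a) a with h | h | h
          · exact h
          · exact absurd h h1
          · exact absurd h h3
        by_cases h4 : a < σ⁻¹ a
        · have hw : wgt σ a = X 2 := by simp [wgt, h1, h3, h4, -Equiv.Perm.coe_inv]
          rw [hw, if_neg (by omega), if_neg (by omega), if_pos ⟨h4, h3'⟩, if_neg h1,
            Finset.card_insert_of_notMem (hmem _ _)]
          ring
        · have hw : wgt σ a = 1 := by simp [wgt, h1, h3, h4, -Equiv.Perm.coe_inv]
          rw [if_neg (by omega), if_neg (by omega), if_neg (by omega), if_neg h1, hw]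
          ring

open MvPolynomial in
private def Wt (σ : Equiv.Perm (Fin m)) : MvPolynomial (Fin 4) ℝ := ∏ x, wgt σ x

open MvPolynomial in
private lemma Wt_eq (σ : Equiv.Perm (Fin m)) :
    Wt σ = X 0 ^ cval σ * X 1 ^ cda σ * X 2 ^ cdd σ * X 3 ^ fixc σ := by
  unfold Wt cval cda cdd fixc
  exact prod_wgt σ univ

private lemma filter_erase_card (p : Fin m → Prop) [DecidablePred p] (x0 : Fin m) :
    ((univ.erase x0).filter p).card =
      if p x0 then (univ.filter p).card - 1 else (univ.filter p).card := by
  rw [Finset.filter_erase]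
  by_cases h : p x0
  · rw [if_pos h, Finset.card_erase_of_mem (by simp [h])]
  · rw [if_neg h, Finset.erase_eq_of_notMem (by simp [h])]

open MvPolynomial in
private lemma prod_wgt_erase_fix {σ : Equiv.Perm (Fin m)} {x0 : Fin m} (h : σ x0 = x0) :
    ∏ x ∈ univ.erase x0, wgt σ x =
      X 0 ^ cval σ * X 1 ^ cda σ * X 2 ^ cdd σ * X 3 ^ (fixc σ - 1) := by
  have h2 : σ⁻¹ x0 = x0 := by conv_lhs => rw [← h]; rw [Equiv.Perm.coe_inv, Equiv.symm_apply_apply]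
  rw [prod_wgt]
  simp only [filter_erase_card]
  rw [if_neg (by omega), if_neg (by omega), if_neg (by omega), if_pos h]
  rfl

open MvPolynomial in
private lemma prod_wgt_erase_cdd {σ : Equiv.Perm (Fin m)} {x0 : Fin m}
    (h : x0 < σ⁻¹ x0) (h' : σ x0 < x0) :
    ∏ x ∈ univ.erase x0, wgt σ x =
      X 0 ^ cval σ * X 1 ^ cda σ * X 2 ^ (cdd σ - 1) * X 3 ^ fixc σ := by
  rw [prod_wgt]
  simp only [filter_erase_card]
  rw [if_neg (by omega), if_neg (by omega), if_pos ⟨h, h'⟩, if_neg (by omega)]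
  rfl

open MvPolynomial in
private lemma prod_wgt_erase_cda {σ : Equiv.Perm (Fin m)} {x0 : Fin m}
    (h : σ⁻¹ x0 < x0) (h' : x0 < σ x0) :
    ∏ x ∈ univ.erase x0, wgt σ x =
      X 0 ^ cval σ * X 1 ^ (cda σ - 1) * X 2 ^ cdd σ * X 3 ^ fixc σ := by
  rw [prod_wgt]
  simp only [filter_erase_card]
  rw [if_neg (by omega), if_pos ⟨h, h'⟩, if_neg (by omega), if_neg (by omega)]
  rfl
/-! ### The insertion decomposition -/

private def pext (τ : Equiv.Perm (Fin m)) : Equiv.Perm (Fin (m + 1)) where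
  toFun := Fin.lastCases (Fin.last m) (fun x => (τ x).castSucc)
  invFun := Fin.lastCases (Fin.last m) (fun x => (τ⁻¹ x).castSucc)
  left_inv := by
    intro x
    induction x using Fin.lastCases with
    | last => simp
    | cast x => simp
  right_inv := by
    intro x
    induction x using Fin.lastCases with
    | last => simp
    | cast x => simp

@[simp] private lemma pext_castSucc (τ : Equiv.Perm (Fin m)) (x : Fin m) :
    pext τ x.castSucc = (τ x).castSucc := by
  simp [pext]

@[simp] private lemma pext_last (τ : Equiv.Perm (Fin m)) :
    pext τ (Fin.last m) = Fin.last m := by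
  simp [pext]

@[simp] private lemma pext_inv_castSucc (τ : Equiv.Perm (Fin m)) (x : Fin m) :
    (pext τ)⁻¹ x.castSucc = (τ⁻¹ x).castSucc := by
  show (pext τ).symm x.castSucc = _
  simp [pext]

@[simp] private lemma pext_inv_last (τ : Equiv.Perm (Fin m)) :
    (pext τ)⁻¹ (Fin.last m) = Fin.last m := by
  show (pext τ).symm (Fin.last m) = _
  simp [pext]

private def Phi (i : Fin m) (τ : Equiv.Perm (Fin m)) : Equiv.Perm (Fin (m + 1)) :=
  (Equiv.swap i.castSucc (Fin.last m)).trans (pext τ)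

private lemma Phi_apply (i : Fin m) (τ : Equiv.Perm (Fin m)) (x : Fin (m + 1)) :
    Phi i τ x = pext τ (Equiv.swap i.castSucc (Fin.last m) x) := rfl

private lemma Phi_inv_apply (i : Fin m) (τ : Equiv.Perm (Fin m)) (x : Fin (m + 1)) :
    (Phi i τ)⁻¹ x = Equiv.swap i.castSucc (Fin.last m) ((pext τ)⁻¹ x) := rfl

private lemma castSucc_ne_last (x : Fin m) : x.castSucc ≠ Fin.last m :=
  ne_of_lt (Fin.castSucc_lt_last x)

private lemma L1 {i x : Fin m} (τ : Equiv.Perm (Fin m)) (hx : x ≠ i) :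
    Phi i τ x.castSucc = (τ x).castSucc := by
  rw [Phi_apply, Equiv.swap_apply_of_ne_of_ne (by simpa [Fin.castSucc_inj] using hx)
    (castSucc_ne_last x), pext_castSucc]

private lemma L2 (i : Fin m) (τ : Equiv.Perm (Fin m)) :
    Phi i τ i.castSucc = Fin.last m := by
  rw [Phi_apply, Equiv.swap_apply_left, pext_last]

private lemma L3 (i : Fin m) (τ : Equiv.Perm (Fin m)) :
    Phi i τ (Fin.last m) = (τ i).castSucc := by
  rw [Phi_apply, Equiv.swap_apply_right, pext_castSucc]

private lemma L4 (i : Fin m) (τ : Equiv.Perm (Fin m)) :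
    (Phi i τ)⁻¹ (Fin.last m) = i.castSucc := by
  rw [Phi_inv_apply, pext_inv_last, Equiv.swap_apply_right]

private lemma L5 {i y : Fin m} (τ : Equiv.Perm (Fin m)) (hy : y ≠ τ i) :
    (Phi i τ)⁻¹ y.castSucc = (τ⁻¹ y).castSucc := by
  rw [Phi_inv_apply, pext_inv_castSucc, Equiv.swap_apply_of_ne_of_ne
    (by simp [Fin.castSucc_inj]; intro hc; exact hy (by rw [← hc]; simp))
    (castSucc_ne_last _)]

private lemma L6 (i : Fin m) (τ : Equiv.Perm (Fin m)) :
    (Phi i τ)⁻¹ (τ i).castSucc = Fin.last m := by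
  rw [Phi_inv_apply, pext_inv_castSucc]
  simp [Equiv.swap_apply_left]
/-! ### Weight transfer under the insertion -/

open MvPolynomial in
private lemma wgt_congr {m1 m2 : ℕ} {σ : Equiv.Perm (Fin m1)} {σ' : Equiv.Perm (Fin m2)}
    {x : Fin m1} {x' : Fin m2}
    (hfix : σ x = x ↔ σ' x' = x') (hlt : x < σ x ↔ x' < σ' x')
    (hinv : σ⁻¹ x < x ↔ σ'⁻¹ x' < x') (hinv2 : x < σ⁻¹ x ↔ x' < σ'⁻¹ x') :
    wgt σ x = wgt σ' x' := by
  unfold wgt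
  exact if_congr hfix rfl (if_congr hlt (if_congr hinv rfl rfl) (if_congr hinv2 rfl rfl))

private lemma tau_apply_ne {τ : Equiv.Perm (Fin m)} {x : Fin m} (h : τ x ≠ x) :
    τ (τ x) = τ x ↔ False := by
  simp only [iff_false]
  intro hc
  exact h (τ.injective hc)

private lemma G {i x : Fin m} (τ : Equiv.Perm (Fin m)) (hx : x ≠ i)
    (hcond : x = τ i → τ i < i) : wgt (Phi i τ) x.castSucc = wgt τ x := by
  by_cases hxj : x = τ i
  · subst hxj
    have hlt : τ i < i := hcond rfl
    have hne : τ i ≠ i := hx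
    have happ : Phi i τ (τ i).castSucc = (τ (τ i)).castSucc := L1 τ hx
    have hinv : (Phi i τ)⁻¹ (τ i).castSucc = Fin.last m := L6 i τ
    have hti : τ⁻¹ (τ i) = i := by simp
    apply wgt_congr
    · rw [happ]
      constructor
      · intro hc
        exact absurd (τ.injective (Fin.castSucc_inj.mp hc)) hne
      · intro hc
        exact absurd (τ.injective hc) hne
    · rw [happ, Fin.castSucc_lt_castSucc_iff]
    · rw [hinv, hti]
      constructor
      · intro hc; exact absurd hc (not_lt.mpr (le_of_lt (Fin.castSucc_lt_last _)))
      · intro hc; exact absurd hc (not_lt.mpr (le_of_lt hlt))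
    · rw [hinv, hti]
      exact ⟨fun _ => hlt, fun _ => Fin.castSucc_lt_last _⟩
  · apply wgt_congr
    · rw [L1 τ hx, Fin.castSucc_inj]
    · rw [L1 τ hx, Fin.castSucc_lt_castSucc_iff]
    · rw [L5 τ hxj, Fin.castSucc_lt_castSucc_iff]
    · rw [L5 τ hxj, Fin.castSucc_lt_castSucc_iff]

private lemma G2 {i : Fin m} (τ : Equiv.Perm (Fin m)) (h1 : i < τ i) :
    wgt (Phi i τ) i.castSucc = wgt τ i := by
  have hne : i ≠ τ i := ne_of_lt h1
  have happ : Phi i τ i.castSucc = Fin.last m := L2 i τ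
  have hinv : (Phi i τ)⁻¹ i.castSucc = (τ⁻¹ i).castSucc := L5 τ hne
  apply wgt_congr
  · rw [happ]
    simp only [iff_iff_implies_and_implies]
    exact ⟨fun hc => absurd hc.symm (castSucc_ne_last i), fun hc => absurd hc.symm (ne_of_lt h1)⟩
  · rw [happ]
    exact ⟨fun _ => h1, fun _ => Fin.castSucc_lt_last _⟩
  · rw [hinv, Fin.castSucc_lt_castSucc_iff]
  · rw [hinv, Fin.castSucc_lt_castSucc_iff]

open MvPolynomial in
private lemma wgt_Phi_last (i : Fin m) (τ : Equiv.Perm (Fin m)) :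
    wgt (Phi i τ) (Fin.last m) = 1 := by
  unfold wgt
  rw [if_neg (by rw [L3]; exact castSucc_ne_last _),
      if_neg (by rw [L3]; exact not_lt.mpr (le_of_lt (Fin.castSucc_lt_last _))),
      if_neg (by rw [L4]; exact not_lt.mpr (le_of_lt (Fin.castSucc_lt_last _)))]

open MvPolynomial in
private lemma Wt_Phi (i : Fin m) (τ : Equiv.Perm (Fin m)) :
    Wt (Phi i τ) = ∏ x : Fin m, wgt (Phi i τ) x.castSucc := by
  unfold Wt
  rw [Fin.prod_univ_castSucc, wgt_Phi_last, mul_one]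

open MvPolynomial in
private lemma Wt_pext (τ : Equiv.Perm (Fin m)) : Wt (pext τ) = X 3 * Wt τ := by
  unfold Wt
  rw [Fin.prod_univ_castSucc]
  have h1 : wgt (pext τ) (Fin.last m) = X 3 := by
    unfold wgt; rw [if_pos (pext_last τ)]
  have h2 : ∀ x : Fin m, wgt (pext τ) x.castSucc = wgt τ x := by
    intro x
    apply wgt_congr
    · rw [pext_castSucc, Fin.castSucc_inj]
    · rw [pext_castSucc, Fin.castSucc_lt_castSucc_iff]
    · rw [pext_inv_castSucc, Fin.castSucc_lt_castSucc_iff]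
    · rw [pext_inv_castSucc, Fin.castSucc_lt_castSucc_iff]
  rw [Finset.prod_congr rfl (fun x _ => h2 x), h1]
  ring

open MvPolynomial in
private lemma W1' {i : Fin m} (τ : Equiv.Perm (Fin m)) (h : τ i = i) :
    Wt (Phi i τ) =
      X 0 * (X 0 ^ cval τ * X 1 ^ cda τ * X 2 ^ cdd τ * X 3 ^ (fixc τ - 1)) := by
  rw [Wt_Phi, ← Finset.mul_prod_erase univ _ (mem_univ i)]
  have hc : wgt (Phi i τ) i.castSucc = X 0 := by
    unfold wgt
    rw [if_neg (by rw [L2]; exact (castSucc_ne_last i).symm),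
        if_pos (by rw [L2]; exact Fin.castSucc_lt_last _),
        if_neg (by
          have : (Phi i τ)⁻¹ i.castSucc = Fin.last m := by
            have := L6 i τ; rwa [h] at this
          rw [this]; exact not_lt.mpr (le_of_lt (Fin.castSucc_lt_last _)))]
  rw [hc, Finset.prod_congr rfl (fun x hx => G τ (Finset.ne_of_mem_erase hx)
    (fun hxe => absurd (hxe.trans h) (Finset.ne_of_mem_erase hx))),
    prod_wgt_erase_fix h]

open MvPolynomial in
private lemma W2' {i : Fin m} (τ : Equiv.Perm (Fin m)) (h2 : τ i < i) (h1 : τ⁻¹ i < i) :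
    Wt (Phi i τ) = X 1 * Wt τ := by
  have hne : i ≠ τ i := (ne_of_lt h2).symm
  rw [Wt_Phi, ← Finset.mul_prod_erase univ _ (mem_univ i)]
  have hc : wgt (Phi i τ) i.castSucc = X 1 := by
    unfold wgt
    rw [if_neg (by rw [L2]; exact (castSucc_ne_last i).symm),
        if_pos (by rw [L2]; exact Fin.castSucc_lt_last _),
        if_pos (by rw [L5 τ hne, Fin.castSucc_lt_castSucc_iff]; exact h1)]
  have hone : wgt τ i = 1 := by
    unfold wgt
    rw [if_neg (by omega), if_neg (by omega), if_neg (by omega)]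
  rw [hc, Finset.prod_congr rfl (fun x hx => G τ (Finset.ne_of_mem_erase hx) (fun _ => h2))]
  have : Wt τ = wgt τ i * ∏ x ∈ univ.erase i, wgt τ x :=
    (Finset.mul_prod_erase univ _ (mem_univ i)).symm
  rw [this, hone, one_mul]

open MvPolynomial in
private lemma W3' {i : Fin m} (τ : Equiv.Perm (Fin m)) (h2 : τ i < i) (h1 : i < τ⁻¹ i) :
    Wt (Phi i τ) =
      X 0 * (X 0 ^ cval τ * X 1 ^ cda τ * X 2 ^ (cdd τ - 1) * X 3 ^ fixc τ) := by
  have hne : i ≠ τ i := (ne_of_lt h2).symm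
  rw [Wt_Phi, ← Finset.mul_prod_erase univ _ (mem_univ i)]
  have hc : wgt (Phi i τ) i.castSucc = X 0 := by
    unfold wgt
    rw [if_neg (by rw [L2]; exact (castSucc_ne_last i).symm),
        if_pos (by rw [L2]; exact Fin.castSucc_lt_last _),
        if_neg (by rw [L5 τ hne, Fin.castSucc_lt_castSucc_iff]; omega)]
  rw [hc, Finset.prod_congr rfl (fun x hx => G τ (Finset.ne_of_mem_erase hx) (fun _ => h2)),
    prod_wgt_erase_cdd h1 h2]

open MvPolynomial in
private lemma W4' {i : Fin m} (τ : Equiv.Perm (Fin m)) (h1 : i < τ i) (h2 : τ i < τ (τ i)) :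
    Wt (Phi i τ) =
      X 0 * (X 0 ^ cval τ * X 1 ^ (cda τ - 1) * X 2 ^ cdd τ * X 3 ^ fixc τ) := by
  have hji : τ i ≠ i := (ne_of_lt h1).symm
  rw [Wt_Phi, ← Finset.mul_prod_erase univ _ (mem_univ (τ i))]
  have hc : wgt (Phi i τ) (τ i).castSucc = X 0 := by
    unfold wgt
    rw [if_neg (by rw [L1 τ hji]; rw [Fin.castSucc_inj]; intro hcc; exact hji (τ.injective hcc)),
        if_pos (by rw [L1 τ hji, Fin.castSucc_lt_castSucc_iff]; exact h2),
        if_neg (by rw [L6]; exact not_lt.mpr (le_of_lt (Fin.castSucc_lt_last _)))]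
  have hother : ∀ x ∈ univ.erase (τ i), wgt (Phi i τ) x.castSucc = wgt τ x := by
    intro x hx
    by_cases hxi : x = i
    · subst hxi; exact G2 τ h1
    · exact G τ hxi (fun hxe => absurd hxe (Finset.ne_of_mem_erase hx))
  have hmemcda : τ⁻¹ (τ i) < τ i := by simp [h1]
  rw [hc, Finset.prod_congr rfl hother, prod_wgt_erase_cda hmemcda h2]

open MvPolynomial in
private lemma W5' {i : Fin m} (τ : Equiv.Perm (Fin m)) (h1 : i < τ i) (h2 : τ (τ i) < τ i) :
    Wt (Phi i τ) = X 2 * Wt τ := by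
  have hji : τ i ≠ i := (ne_of_lt h1).symm
  rw [Wt_Phi, ← Finset.mul_prod_erase univ _ (mem_univ (τ i))]
  have hc : wgt (Phi i τ) (τ i).castSucc = X 2 := by
    unfold wgt
    rw [if_neg (by rw [L1 τ hji]; rw [Fin.castSucc_inj]; intro hcc; exact hji (τ.injective hcc)),
        if_neg (by rw [L1 τ hji, Fin.castSucc_lt_castSucc_iff]; omega),
        if_pos (by rw [L6]; exact Fin.castSucc_lt_last _)]
  have hother : ∀ x ∈ univ.erase (τ i), wgt (Phi i τ) x.castSucc = wgt τ x := by
    intro x hx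
    by_cases hxi : x = i
    · subst hxi; exact G2 τ h1
    · exact G τ hxi (fun hxe => absurd hxe (Finset.ne_of_mem_erase hx))
  have hone : wgt τ (τ i) = 1 := by
    unfold wgt
    rw [if_neg (by intro hcc; exact hji (τ.injective hcc)), if_neg (by omega),
        if_neg (by simp; omega)]
  rw [hc, Finset.prod_congr rfl hother]
  have : Wt τ = wgt τ (τ i) * ∏ x ∈ univ.erase (τ i), wgt τ x :=
    (Finset.mul_prod_erase univ _ (mem_univ (τ i))).symm
  rw [this, hone, one_mul]
/-! ### The recurrence -/

open MvPolynomial in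
private def Pn (k : ℕ) : MvPolynomial (Fin 4) ℝ := ∑ σ : Equiv.Perm (Fin k), Wt σ

private def PhiFull (p : Fin (m + 1) × Equiv.Perm (Fin m)) : Equiv.Perm (Fin (m + 1)) :=
  (Equiv.swap p.1 (Fin.last m)).trans (pext p.2)

private lemma PhiFull_castSucc (i : Fin m) (τ : Equiv.Perm (Fin m)) :
    PhiFull (i.castSucc, τ) = Phi i τ := rfl

private lemma PhiFull_last (τ : Equiv.Perm (Fin m)) :
    PhiFull (Fin.last m, τ) = pext τ := by
  unfold PhiFull
  simp [Equiv.swap_self]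

private lemma PhiFull_inj : Function.Injective (PhiFull (m := m)) := by
  rintro ⟨i, τ⟩ ⟨i', τ'⟩ h
  have hinv : ∀ (j : Fin (m + 1)) (ρ : Equiv.Perm (Fin m)),
      (PhiFull (j, ρ))⁻¹ (Fin.last m) = j := by
    intro j ρ
    show (Equiv.swap j (Fin.last m)) ((pext ρ)⁻¹ (Fin.last m)) = j
    rw [pext_inv_last, Equiv.swap_apply_right]
  have hii : i = i' := by
    rw [← hinv i τ, ← hinv i' τ', h]
  subst hii
  have hpext : pext τ = pext τ' := by
    apply Equiv.ext
    intro x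
    have h1 := congrArg (fun e => e (Equiv.swap i (Fin.last m) x)) h
    simpa [PhiFull, Equiv.swap_apply_self] using h1
  have : τ = τ' := by
    apply Equiv.ext
    intro x
    have := congrArg (fun e => e x.castSucc) hpext
    simpa [Fin.castSucc_inj] using this
  rw [this]

private lemma PhiFull_bij : Function.Bijective (PhiFull (m := m)) := by
  rw [Fintype.bijective_iff_injective_and_card]
  refine ⟨PhiFull_inj, ?_⟩
  rw [Fintype.card_prod, Fintype.card_perm, Fintype.card_perm, Fintype.card_fin,
    Fintype.card_fin, Nat.factorial_succ]

open MvPolynomial in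
private lemma sum_Phi (τ : Equiv.Perm (Fin m)) :
    ∑ i : Fin m, Wt (Phi i τ) =
      fixc τ • (X 0 * (X 0 ^ cval τ * X 1 ^ cda τ * X 2 ^ cdd τ * X 3 ^ (fixc τ - 1)))
      + cpk τ • (X 1 * Wt τ)
      + cdd τ • (X 0 * (X 0 ^ cval τ * X 1 ^ cda τ * X 2 ^ (cdd τ - 1) * X 3 ^ fixc τ))
      + cda τ • (X 0 * (X 0 ^ cval τ * X 1 ^ (cda τ - 1) * X 2 ^ cdd τ * X 3 ^ fixc τ))
      + cpk τ • (X 2 * Wt τ) := by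
  set c1 := (X 0 : MvPolynomial (Fin 4) ℝ) * (X 0 ^ cval τ * X 1 ^ cda τ * X 2 ^ cdd τ * X 3 ^ (fixc τ - 1))
    with hc1
  set c3 := (X 0 : MvPolynomial (Fin 4) ℝ) * (X 0 ^ cval τ * X 1 ^ cda τ * X 2 ^ (cdd τ - 1) * X 3 ^ fixc τ)
    with hc3
  set c4 := (X 0 : MvPolynomial (Fin 4) ℝ) * (X 0 ^ cval τ * X 1 ^ (cda τ - 1) * X 2 ^ cdd τ * X 3 ^ fixc τ)
    with hc4
  have key : ∀ i : Fin m, Wt (Phi i τ) =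
      (if τ i = i then c1 else 0)
      + (if τ⁻¹ i < i ∧ τ i < i then X 1 * Wt τ else 0)
      + (if i < τ⁻¹ i ∧ τ i < i then c3 else 0)
      + (if i < τ i ∧ τ i < τ (τ i) then c4 else 0)
      + (if i < τ i ∧ τ (τ i) < τ i then X 2 * Wt τ else 0) := by
    intro i
    by_cases h1 : τ i = i
    · rw [if_pos h1, if_neg (by omega), if_neg (by omega), if_neg (by omega),
        if_neg (by omega), W1' τ h1]
      ring
    · have hne2 : τ⁻¹ i ≠ i := inv_ne_self h1
      have hne3 : τ (τ i) ≠ τ i := fun hc => h1 (τ.injective hc)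
      by_cases h2 : τ i < i
      · by_cases h3 : τ⁻¹ i < i
        · rw [if_neg h1, if_pos ⟨h3, h2⟩, if_neg (by omega), if_neg (by omega),
            if_neg (by omega), W2' τ h2 h3]
          ring
        · have h3' : i < τ⁻¹ i := by omega
          rw [if_neg h1, if_neg (by omega), if_pos ⟨h3', h2⟩, if_neg (by omega),
            if_neg (by omega), W3' τ h2 h3']
          ring
      · have h2' : i < τ i := by omega
        by_cases h4 : τ (τ i) < τ i
        · rw [if_neg h1, if_neg (by omega), if_neg (by omega), if_neg (by omega),
            if_pos ⟨h2', h4⟩, W5' τ h2' h4]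
          ring
        · have h4' : τ i < τ (τ i) := by omega
          rw [if_neg h1, if_neg (by omega), if_neg (by omega), if_pos ⟨h2', h4'⟩,
            if_neg (by omega), W4' τ h2' h4']
          ring
  rw [Finset.sum_congr rfl (fun i _ => key i)]
  rw [Finset.sum_add_distrib, Finset.sum_add_distrib, Finset.sum_add_distrib,
    Finset.sum_add_distrib]
  rw [← Finset.sum_filter, ← Finset.sum_filter, ← Finset.sum_filter, ← Finset.sum_filter,
    ← Finset.sum_filter]
  rw [Finset.sum_const, Finset.sum_const, Finset.sum_const, Finset.sum_const, Finset.sum_const]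
  have hcard4 : (univ.filter fun i => i < τ i ∧ τ i < τ (τ i)).card = cda τ := by
    unfold cda
    apply Finset.card_bij' (fun i _ => τ i) (fun j _ => τ⁻¹ j)
    · intro a ha
      simp only [mem_filter, mem_univ, true_and] at ha ⊢
      exact ⟨by simpa using ha.1, ha.2⟩
    · intro j hj
      simp only [mem_filter, mem_univ, true_and, Equiv.Perm.coe_inv, Equiv.apply_symm_apply] at hj ⊢
      exact ⟨hj.1, hj.2⟩
    · intro a _; simp
    · intro j _; simp
  have hcard5 : (univ.filter fun i => i < τ i ∧ τ (τ i) < τ i).card = cpk τ := by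
    unfold cpk
    apply Finset.card_bij' (fun i _ => τ i) (fun j _ => τ⁻¹ j)
    · intro a ha
      simp only [mem_filter, mem_univ, true_and] at ha ⊢
      exact ⟨by simpa using ha.1, ha.2⟩
    · intro j hj
      simp only [mem_filter, mem_univ, true_and, Equiv.Perm.coe_inv, Equiv.apply_symm_apply] at hj ⊢
      exact ⟨hj.1, hj.2⟩
    · intro a _; simp
    · intro j _; simp
  have hcard1 : (univ.filter fun i => τ i = i).card = fixc τ := rfl
  have hcard2 : (univ.filter fun i => τ⁻¹ i < i ∧ τ i < i).card = cpk τ := rfl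
  have hcard3 : (univ.filter fun i => i < τ⁻¹ i ∧ τ i < i).card = cdd τ := rfl
  rw [hcard1, hcard2, hcard3, hcard4, hcard5]

open MvPolynomial in
private lemma Pn_succ (m : ℕ) :
    Pn (m + 1) = ∑ τ : Equiv.Perm (Fin m),
      (X 3 * Wt τ
      + (fixc τ • (X 0 * (X 0 ^ cval τ * X 1 ^ cda τ * X 2 ^ cdd τ * X 3 ^ (fixc τ - 1)))
        + cpk τ • (X 1 * Wt τ)
        + cdd τ • (X 0 * (X 0 ^ cval τ * X 1 ^ cda τ * X 2 ^ (cdd τ - 1) * X 3 ^ fixc τ))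
        + cda τ • (X 0 * (X 0 ^ cval τ * X 1 ^ (cda τ - 1) * X 2 ^ cdd τ * X 3 ^ fixc τ))
        + cpk τ • (X 2 * Wt τ))) := by
  unfold Pn
  rw [← Function.Bijective.sum_comp PhiFull_bij Wt, Fintype.sum_prod_type,
    Fin.sum_univ_castSucc]
  have h1 : ∀ i : Fin m, ∑ τ : Equiv.Perm (Fin m), Wt (PhiFull (i.castSucc, τ))
      = ∑ τ : Equiv.Perm (Fin m), Wt (Phi i τ) := by
    intro i
    exact Finset.sum_congr rfl (fun τ _ => by rw [PhiFull_castSucc])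
  rw [Finset.sum_congr rfl (fun i _ => h1 i), Finset.sum_comm]
  have h2 : ∑ τ : Equiv.Perm (Fin m), Wt (PhiFull (Fin.last m, τ))
      = ∑ τ : Equiv.Perm (Fin m), X 3 * Wt τ := by
    exact Finset.sum_congr rfl (fun τ _ => by rw [PhiFull_last, Wt_pext])
  rw [h2, ← Finset.sum_add_distrib]
  apply Finset.sum_congr rfl
  intro τ _
  rw [sum_Phi]
  ring
/-! ### Derivative form of the recurrence and invariance -/

open MvPolynomial in
private lemma pdM0 (a b c f : ℕ) :
    (pderiv 0) ((X 0 : MvPolynomial (Fin 4) ℝ) ^ a * X 1 ^ b * X 2 ^ c * X 3 ^ f) =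
      a • (X 0 ^ (a - 1) * (X 1 ^ b * X 2 ^ c * X 3 ^ f)) := by
  rw [pderiv_mul, pderiv_mul, pderiv_mul, Derivation.leibniz_pow, Derivation.leibniz_pow,
    Derivation.leibniz_pow, Derivation.leibniz_pow, pderiv_X_self,
    pderiv_X_of_ne (by decide : (1 : Fin 4) ≠ 0), pderiv_X_of_ne (by decide : (2 : Fin 4) ≠ 0),
    pderiv_X_of_ne (by decide : (3 : Fin 4) ≠ 0)]
  simp only [smul_zero, mul_zero, add_zero, zero_mul, smul_eq_mul, nsmul_eq_mul]
  ring

open MvPolynomial in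
private lemma pdM1 (a b c f : ℕ) :
    (pderiv 1) ((X 0 : MvPolynomial (Fin 4) ℝ) ^ a * X 1 ^ b * X 2 ^ c * X 3 ^ f) =
      b • (X 1 ^ (b - 1) * (X 0 ^ a * X 2 ^ c * X 3 ^ f)) := by
  rw [pderiv_mul, pderiv_mul, pderiv_mul, Derivation.leibniz_pow, Derivation.leibniz_pow,
    Derivation.leibniz_pow, Derivation.leibniz_pow, pderiv_X_self,
    pderiv_X_of_ne (by decide : (0 : Fin 4) ≠ 1), pderiv_X_of_ne (by decide : (2 : Fin 4) ≠ 1),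
    pderiv_X_of_ne (by decide : (3 : Fin 4) ≠ 1)]
  simp only [smul_zero, mul_zero, add_zero, zero_mul, smul_eq_mul, nsmul_eq_mul, zero_add]
  ring

open MvPolynomial in
private lemma pdM2 (a b c f : ℕ) :
    (pderiv 2) ((X 0 : MvPolynomial (Fin 4) ℝ) ^ a * X 1 ^ b * X 2 ^ c * X 3 ^ f) =
      c • (X 2 ^ (c - 1) * (X 0 ^ a * X 1 ^ b * X 3 ^ f)) := by
  rw [pderiv_mul, pderiv_mul, pderiv_mul, Derivation.leibniz_pow, Derivation.leibniz_pow,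
    Derivation.leibniz_pow, Derivation.leibniz_pow, pderiv_X_self,
    pderiv_X_of_ne (by decide : (0 : Fin 4) ≠ 2), pderiv_X_of_ne (by decide : (1 : Fin 4) ≠ 2),
    pderiv_X_of_ne (by decide : (3 : Fin 4) ≠ 2)]
  simp only [smul_zero, mul_zero, add_zero, zero_mul, smul_eq_mul, nsmul_eq_mul, zero_add]
  ring

open MvPolynomial in
private lemma pdM3 (a b c f : ℕ) :
    (pderiv 3) ((X 0 : MvPolynomial (Fin 4) ℝ) ^ a * X 1 ^ b * X 2 ^ c * X 3 ^ f) =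
      f • (X 3 ^ (f - 1) * (X 0 ^ a * X 1 ^ b * X 2 ^ c)) := by
  rw [pderiv_mul, pderiv_mul, pderiv_mul, Derivation.leibniz_pow, Derivation.leibniz_pow,
    Derivation.leibniz_pow, Derivation.leibniz_pow, pderiv_X_self,
    pderiv_X_of_ne (by decide : (0 : Fin 4) ≠ 3), pderiv_X_of_ne (by decide : (1 : Fin 4) ≠ 3),
    pderiv_X_of_ne (by decide : (2 : Fin 4) ≠ 3)]
  simp only [smul_zero, mul_zero, add_zero, zero_mul, smul_eq_mul, nsmul_eq_mul, zero_add]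
  ring

open MvPolynomial in
private lemma absorb (a : ℕ) (R : MvPolynomial (Fin 4) ℝ) :
    (X 0 : MvPolynomial (Fin 4) ℝ) * (a • (X 0 ^ (a - 1) * R)) = a • (X 0 ^ a * R) := by
  cases a with
  | zero => simp
  | succ k =>
    simp only [Nat.add_sub_cancel, nsmul_eq_mul, pow_succ]
    ring

open MvPolynomial in
private lemma step_tau (a b c f : ℕ) :
    (X 3 : MvPolynomial (Fin 4) ℝ) * (X 0 ^ a * X 1 ^ b * X 2 ^ c * X 3 ^ f)
    + (f • (X 0 * (X 0 ^ a * X 1 ^ b * X 2 ^ c * X 3 ^ (f - 1)))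
      + a • (X 1 * (X 0 ^ a * X 1 ^ b * X 2 ^ c * X 3 ^ f))
      + c • (X 0 * (X 0 ^ a * X 1 ^ b * X 2 ^ (c - 1) * X 3 ^ f))
      + b • (X 0 * (X 0 ^ a * X 1 ^ (b - 1) * X 2 ^ c * X 3 ^ f))
      + a • (X 2 * (X 0 ^ a * X 1 ^ b * X 2 ^ c * X 3 ^ f)))
    = X 3 * (X 0 ^ a * X 1 ^ b * X 2 ^ c * X 3 ^ f)
      + (X 1 + X 2) * (X 0 * (pderiv 0) (X 0 ^ a * X 1 ^ b * X 2 ^ c * X 3 ^ f))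
      + X 0 * ((pderiv 1) (X 0 ^ a * X 1 ^ b * X 2 ^ c * X 3 ^ f)
              + (pderiv 2) (X 0 ^ a * X 1 ^ b * X 2 ^ c * X 3 ^ f)
              + (pderiv 3) (X 0 ^ a * X 1 ^ b * X 2 ^ c * X 3 ^ f)) := by
  rw [pdM0, pdM1, pdM2, pdM3, absorb]
  simp only [nsmul_eq_mul]
  ring

open MvPolynomial in
private lemma Pn_succ_pderiv (m : ℕ) :
    Pn (m + 1) = X 3 * Pn m + (X 1 + X 2) * (X 0 * (pderiv 0) (Pn m))
      + X 0 * ((pderiv 1) (Pn m) + (pderiv 2) (Pn m) + (pderiv 3) (Pn m)) := by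
  rw [Pn_succ]
  unfold Pn
  rw [map_sum (pderiv 0), map_sum (pderiv 1), map_sum (pderiv 2), map_sum (pderiv 3)]
  simp only [Finset.mul_sum, ← Finset.sum_add_distrib]
  apply Finset.sum_congr rfl
  intro τ _
  rw [cpk_eq_cval τ, Wt_eq τ]
  rw [pdM0, pdM1, pdM2, pdM3, absorb]
  simp only [nsmul_eq_mul]
  ring
/-! ### Invariance: `Pn` depends only on `X 1 + X 2` -/

open MvPolynomial in
private def gmap : Fin 3 → MvPolynomial (Fin 4) ℝ := ![X 0, X 1 + X 2, X 3]

open MvPolynomial in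
private lemma chain (k : Fin 4) (j0 : Fin 3)
    (hk : ∀ j : Fin 3, (pderiv k) (gmap j) = if j = j0 then 1 else 0)
    (Q : MvPolynomial (Fin 3) ℝ) :
    (pderiv k) (aeval gmap Q) = aeval gmap ((pderiv j0) Q) := by
  induction Q using MvPolynomial.induction_on with
  | C a => simp
  | add p q hp hq =>
    rw [map_add (aeval gmap) p q, map_add (pderiv k) _ _, hp, hq,
      map_add (pderiv j0) p q, map_add (aeval gmap) _ _]
  | mul_X p j hp =>
    rw [map_mul, aeval_X, pderiv_mul, hp, hk j, pderiv_mul, map_add, map_mul, aeval_X,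
      pderiv_X]
    rw [map_mul]
    congr 1
    by_cases hj : j = j0
    · subst hj
      rw [if_pos rfl, Pi.single_eq_same, map_one]
    · rw [if_neg hj, Pi.single_eq_of_ne hj, map_zero]

open MvPolynomial in
private lemma chain0 (Q : MvPolynomial (Fin 3) ℝ) :
    (pderiv 0) (aeval gmap Q) = aeval gmap ((pderiv 0) Q) := by
  apply chain
  intro j
  fin_cases j <;> simp [gmap] <;>
    first
      | rfl
      | (rw [pderiv_X_of_ne (by decide)]; rfl)
      | (rw [map_add, pderiv_X_of_ne (by decide), pderiv_X_of_ne (by decide)]; simp)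

open MvPolynomial in
private lemma chain1 (Q : MvPolynomial (Fin 3) ℝ) :
    (pderiv 1) (aeval gmap Q) = aeval gmap ((pderiv 1) Q) := by
  apply chain
  intro j
  fin_cases j
  · show (pderiv 1) (X 0) = _
    rw [pderiv_X_of_ne (by decide)]
    simp
  · show (pderiv 1) (X 1 + X 2) = _
    rw [map_add, pderiv_X_self, pderiv_X_of_ne (by decide)]
    simp
  · show (pderiv 1) (X 3) = _
    rw [pderiv_X_of_ne (by decide)]
    simp

open MvPolynomial in
private lemma chain2 (Q : MvPolynomial (Fin 3) ℝ) :
    (pderiv 2) (aeval gmap Q) = aeval gmap ((pderiv 1) Q) := by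
  apply chain
  intro j
  fin_cases j
  · show (pderiv 2) (X 0) = _
    rw [pderiv_X_of_ne (by decide)]
    simp
  · show (pderiv 2) (X 1 + X 2) = _
    rw [map_add, pderiv_X_self, pderiv_X_of_ne (by decide)]
    simp
  · show (pderiv 2) (X 3) = _
    rw [pderiv_X_of_ne (by decide)]
    simp

open MvPolynomial in
private lemma chain3 (Q : MvPolynomial (Fin 3) ℝ) :
    (pderiv 3) (aeval gmap Q) = aeval gmap ((pderiv 2) Q) := by
  apply chain
  intro j
  fin_cases j
  · show (pderiv 3) (X 0) = _
    rw [pderiv_X_of_ne (by decide)]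
    simp
  · show (pderiv 3) (X 1 + X 2) = _
    rw [map_add, pderiv_X_of_ne (by decide), pderiv_X_of_ne (by decide)]
    simp
  · show (pderiv 3) (X 3) = _
    rw [pderiv_X_self]
    simp

open MvPolynomial in
private lemma Pn_zero : Pn 0 = 1 := by
  unfold Pn
  have h : ∀ σ : Equiv.Perm (Fin 0), Wt σ = 1 := by
    intro σ
    unfold Wt
    simp
  rw [Finset.sum_congr rfl (fun σ _ => h σ), Finset.sum_const, Finset.card_univ,
    Fintype.card_perm]
  simp

open MvPolynomial in
private lemma Pn_mem (k : ℕ) : ∃ Q : MvPolynomial (Fin 3) ℝ, Pn k = aeval gmap Q := by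
  induction k with
  | zero => exact ⟨1, by rw [Pn_zero, map_one]⟩
  | succ m ih =>
    obtain ⟨Q, hQ⟩ := ih
    refine ⟨X 2 * Q + X 1 * (X 0 * (pderiv 0) Q)
      + X 0 * ((pderiv 1) Q + (pderiv 1) Q + (pderiv 2) Q), ?_⟩
    rw [Pn_succ_pderiv, hQ, chain0, chain1, chain2, chain3]
    simp only [map_add, map_mul, aeval_X]
    show _ = (X 3) * _ + (X 1 + X 2) * (X 0 * _) + (X 0) * _
    ring

open MvPolynomial in
private def Psum (k : ℕ) (A u v Cc : ℝ) : ℝ :=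
  ∑ σ : Equiv.Perm (Fin k), A ^ cval σ * u ^ cda σ * v ^ cdd σ * Cc ^ fixc σ

open MvPolynomial in
private lemma Psum_eq (k : ℕ) (A u v Cc : ℝ) :
    Psum k A u v Cc = aeval ![A, u, v, Cc] (Pn k) := by
  unfold Psum Pn
  rw [map_sum]
  apply Finset.sum_congr rfl
  intro σ _
  rw [Wt_eq σ, map_mul, map_mul, map_mul, map_pow, map_pow, map_pow, map_pow, aeval_X,
    aeval_X, aeval_X, aeval_X]
  norm_num
  rfl

open MvPolynomial in
private lemma Psum_invariant (k : ℕ) (A u v u' v' Cc : ℝ) (h : u + v = u' + v') :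
    Psum k A u v Cc = Psum k A u' v' Cc := by
  obtain ⟨Q, hQ⟩ := Pn_mem k
  have key : ∀ w z : ℝ, aeval ![A, w, z, Cc] (Pn k) = aeval ![A, w + z, Cc] Q := by
    intro w z
    rw [hQ]
    rw [show (aeval ![A, w, z, Cc] : MvPolynomial (Fin 4) ℝ →ₐ[ℝ] ℝ) (aeval gmap Q)
        = ((aeval ![A, w, z, Cc]).comp (aeval gmap)) Q from rfl,
      MvPolynomial.comp_aeval]
    have he : (fun i => aeval ![A, w, z, Cc] (gmap i)) = ![A, w + z, Cc] := by
      funext j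
      fin_cases j <;> simp [gmap]
    rw [he]
  rw [Psum_eq, Psum_eq, key, key, h]
/-! ### Reduction of both sides -/

private lemma pow_card_eq_prod {k : ℕ} (p : Fin k → Prop) [DecidablePred p] (y : ℝ) :
    y ^ (univ.filter p).card = ∏ i, (if p i then y else 1) := by
  rw [Finset.prod_ite, Finset.prod_const, Finset.prod_const, one_pow, mul_one]

private lemma card_ne_lt (σ : Equiv.Perm (Fin m)) :
    ((univ.filter fun x : Fin m => ¬ σ x = x).filter fun x => x < σ x).card = exc σ := by
  unfold exc
  rw [Finset.filter_filter]
  congr 1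
  apply Finset.filter_congr
  intro x _
  constructor
  · tauto
  · intro hx; exact ⟨by omega, hx⟩

private lemma card_ne_nlt (σ : Equiv.Perm (Fin m)) :
    ((univ.filter fun x : Fin m => ¬ σ x = x).filter fun x => ¬ x < σ x).card = dropc σ := by
  unfold dropc
  rw [Finset.filter_filter]
  congr 1
  apply Finset.filter_congr
  intro x _
  constructor
  · intro hx; omega
  · intro hx; omega

private lemma inner_sum (σ : Equiv.Perm (Fin m)) (y t : ℝ) :
    ∑ ε : Fin m → Bool, y ^ negB ε * t ^ excB σ ε
      = (t + y * t) ^ exc σ * (1 + y) ^ dropc σ * (1 + y * t) ^ fixc σ := by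
  have hterm : ∀ ε : Fin m → Bool, y ^ negB ε * t ^ excB σ ε
      = ∏ i, ((if ε i = true then y else 1) *
          (if (i < σ i ∨ (σ i = i ∧ ε i = true)) then t else 1)) := by
    intro ε
    rw [Finset.prod_mul_distrib]
    unfold negB excB
    rw [pow_card_eq_prod, pow_card_eq_prod]
  rw [Finset.sum_congr rfl (fun ε _ => hterm ε)]
  have hpi := Finset.prod_univ_sum (fun _ : Fin m => (univ : Finset Bool))
    (fun i b => (if b = true then y else 1) *
      (if (i < σ i ∨ (σ i = i ∧ b = true)) then t else 1))
  rw [Fintype.piFinset_univ] at hpi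
  rw [← hpi]
  have hb : ∀ i : Fin m, (∑ b : Bool, ((if b = true then y else 1) *
      (if (i < σ i ∨ (σ i = i ∧ b = true)) then t else 1)))
      = (if σ i = i then 1 + y * t else if i < σ i then t + y * t else 1 + y) := by
    intro i
    rw [Fintype.sum_bool]
    by_cases h1 : σ i = i
    · have h2 : ¬ i < σ i := by omega
      simp [h1, h2]
      ring
    · by_cases h2 : i < σ i
      · simp [h1, h2]
        ring
      · simp [h1, h2]
        ring
  rw [Finset.prod_congr rfl (fun i _ => hb i), Finset.prod_ite, Finset.prod_const,
    Finset.prod_ite, Finset.prod_const, Finset.prod_const, card_ne_lt, card_ne_nlt]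
  unfold fixc
  ring

private lemma lhs_red (k : ℕ) (y t : ℝ) :
    ∑ σ : Equiv.Perm (Fin k) × (Fin k → Bool), y ^ negB σ.2 * t ^ excB σ.1 σ.2
      = Psum k ((1 + y) ^ 2 * t) (t * (1 + y)) (1 + y) (1 + y * t) := by
  rw [Fintype.sum_prod_type]
  unfold Psum
  apply Finset.sum_congr rfl
  intro σ _
  rw [inner_sum σ y t]
  have h1 : exc σ = cval σ + cda σ := exc_eq_cval_add_cda σ
  have h2 : dropc σ = cval σ + cdd σ := by
    have := drop_eq_cpk_add_cdd σ
    have := cpk_eq_cval σ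
    omega
  rw [h1, h2, pow_add, pow_add,
    show ((1 + y) ^ 2 * t) = (1 + y) * (t * (1 + y)) by ring, mul_pow]
  ring

private lemma field_aux (y t : ℝ) (hY : y + t ≠ 0) (hZ : 1 + y * t ≠ 0) (a b c f : ℕ) :
    (1 + y * t) ^ (a + b + (a + c) + f) *
      (((1 + y) ^ 2 * t / ((y + t) * (1 + y * t))) ^ a * ((y + t) / (1 + y * t)) ^ (a + b))
    = ((1 + y) ^ 2 * t) ^ a * (y + t) ^ b * (1 + y * t) ^ c * (1 + y * t) ^ f := by
  rw [div_pow, div_pow, mul_pow, mul_pow (y + t) (1 + y * t), div_mul_div_comm]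
  field_simp
  ring

private lemma rhs_red (k : ℕ) (y t : ℝ) (hY : y + t ≠ 0) (hZ : 1 + y * t ≠ 0) :
    (1 + y * t) ^ k * ∑ σ : Equiv.Perm (Fin k),
        ((1 + y) ^ 2 * t / ((y + t) * (1 + y * t))) ^ cpk σ * ((y + t) / (1 + y * t)) ^ exc σ
      = Psum k ((1 + y) ^ 2 * t) (y + t) (1 + y * t) (1 + y * t) := by
  rw [Finset.mul_sum]
  unfold Psum
  apply Finset.sum_congr rfl
  intro σ _
  have hn : k = exc σ + dropc σ + fixc σ := (univ_card_split σ).symm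
  have h1 : exc σ = cval σ + cda σ := exc_eq_cval_add_cda σ
  have h2 : dropc σ = cval σ + cdd σ := by
    have := drop_eq_cpk_add_cdd σ
    have := cpk_eq_cval σ
    omega
  have hk : k = cval σ + cda σ + (cval σ + cdd σ) + fixc σ := by omega
  rw [show (1 + y * t) ^ k
      = (1 + y * t) ^ (cval σ + cda σ + (cval σ + cdd σ) + fixc σ) from by rw [← hk],
    cpk_eq_cval σ, h1, field_aux y t hY hZ]
end Aux

theorem stmt17 (n : ℕ) (hn : 1 ≤ n) (y t : ℝ)
    (h : (1 + y) * (y + t) * (1 + y * t) ≠ 0) :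
    ∑ σ : Equiv.Perm (Fin n) × (Fin n → Bool),
        y ^ negB σ.2 * t ^ excB σ.1 σ.2 =
      (1 + y * t) ^ n *
        ∑ σ : Equiv.Perm (Fin n),
          ((1 + y) ^ 2 * t / ((y + t) * (1 + y * t))) ^ cpk σ *
            ((y + t) / (1 + y * t)) ^ exc σ := by
  have hy2 : (y + t) ≠ 0 := fun hc => h (by rw [hc]; ring)
  have hy3 : (1 + y * t) ≠ 0 := fun hc => h (by rw [hc]; ring)
  rw [lhs_red n y t, rhs_red n y t hy2 hy3]
  apply Psum_invariant
  ring

end EulerExc
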